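/- Sample-path dominance by induction over events (core of Lemma 2): Let ι be the index set of network nodes and let U, V : ℕ → ι → ℝ be event-indexed state sequences of two coupled policies with V 0 k ≤ U 0 k for every node k. Suppose there are sequences j : ℕ → ι of updated nodes and s, t : ℕ → ℝ of generation times such that for every n: U (n+1) equals U n except that its (j n)-th component is max (U n (j n)) (s n), V (n+1) equals V n except that its (j n)-th component is max (V n (j n)) (t n), and either t n ≤ s n, or t n ≤ U n (j n). Then V n k ≤ U n k for every n ∈ ℕ and every node k. -/
import Mathlib

/-- Sample-path dominance by induction over events (core of Lemma 2). -/
theorem sample_path_dominance {ι : Type*} [DecidableEq ι]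
    (U V : ℕ → ι → ℝ) (j : ℕ → ι) (s t : ℕ → ℝ)
    (h0 : ∀ k, V 0 k ≤ U 0 k)
    (hU : ∀ n, U (n + 1) = Function.update (U n) (j n) (max (U n (j n)) (s n)))
    (hV : ∀ n, V (n + 1) = Function.update (V n) (j n) (max (V n (j n)) (t n)))
    (hcond : ∀ n, t n ≤ s n ∨ t n ≤ U n (j n)) :
    ∀ n k, V n k ≤ U n k := by
  intro n
  induction n with
  | zero => exact h0
  | succ n ih =>
    intro k
    rw [hU n, hV n]
    by_cases hk : k = j n
    · subst hk
      simp only [Function.update_self]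
      rcases hcond n with h | h
      · exact max_le_max (ih (j n)) h
      · exact max_le (le_max_of_le_left (ih (j n))) (le_max_of_le_left h)
    · simp only [Function.update_of_ne hk]
      exact ih k
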